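/- Let z ∈ ℂ with 0 < |z| < 1 and set u = z/|z|. Then conj(z)²·u⁴ - 2·conj(z)·u³ + 2·z·u - z² = 0, and the only roots of this quartic on the unit circle are ±z/|z|; the remaining roots are (1 ± √(1-|z|²))/conj(z), one of modulus greater than 1 and one of modulus less than 1. -/

import Mathlib

open Complex ComplexConjugate

theorem equal_foci_case (z : ℂ) (hz0 : z ≠ 0) (hz1 : ‖z‖ < 1) :
    (conj z ^ 2 * (z / (‖z‖ : ℂ)) ^ 4
        - 2 * conj z * (z / (‖z‖ : ℂ)) ^ 3
        + 2 * z * (z / (‖z‖ : ℂ)) - z ^ 2 = 0) ∧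
    (∀ v : ℂ, ‖v‖ = 1 →
        conj z ^ 2 * v ^ 4 - 2 * conj z * v ^ 3 + 2 * z * v - z ^ 2 = 0 →
        v = z / (‖z‖ : ℂ) ∨ v = -(z / (‖z‖ : ℂ))) ∧
    (conj z ^ 2 * ((1 + (Real.sqrt (1 - ‖z‖ ^ 2) : ℂ)) / conj z) ^ 4
        - 2 * conj z * ((1 + (Real.sqrt (1 - ‖z‖ ^ 2) : ℂ)) / conj z) ^ 3
        + 2 * z * ((1 + (Real.sqrt (1 - ‖z‖ ^ 2) : ℂ)) / conj z) - z ^ 2 = 0) ∧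
    (conj z ^ 2 * ((1 - (Real.sqrt (1 - ‖z‖ ^ 2) : ℂ)) / conj z) ^ 4
        - 2 * conj z * ((1 - (Real.sqrt (1 - ‖z‖ ^ 2) : ℂ)) / conj z) ^ 3
        + 2 * z * ((1 - (Real.sqrt (1 - ‖z‖ ^ 2) : ℂ)) / conj z) - z ^ 2 = 0) ∧
    ‖(1 + (Real.sqrt (1 - ‖z‖ ^ 2) : ℂ)) / conj z‖ > 1 ∧
    ‖(1 - (Real.sqrt (1 - ‖z‖ ^ 2) : ℂ)) / conj z‖ < 1 := by
  have hr0 : 0 < ‖z‖ := norm_pos_iff.mpr hz0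
  set r : ℝ := ‖z‖ with hr
  have hrC : (r : ℂ) ≠ 0 := by exact_mod_cast hr0.ne'
  have hzc : conj z ≠ 0 := by simpa using hz0
  have hmul : conj z * z = (r : ℂ) ^ 2 := by
    rw [mul_comm, Complex.mul_conj, ← Complex.sq_norm]; push_cast; ring
  set s : ℝ := Real.sqrt (1 - r ^ 2) with hs
  have hs0 : 0 ≤ s := Real.sqrt_nonneg _
  have hs2 : s ^ 2 = 1 - r ^ 2 := Real.sq_sqrt (by nlinarith)
  have hs2C : (s : ℂ) ^ 2 = 1 - (r : ℂ) ^ 2 := by exact_mod_cast hs2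
  have hs1 : s < 1 := by nlinarith
  have hfac : ∀ u : ℂ, conj z ^ 2 * u ^ 4 - 2 * conj z * u ^ 3 + 2 * z * u - z ^ 2
      = (conj z * u ^ 2 - z) * (conj z * u ^ 2 - 2 * u + z) := fun u => by ring
  have h2 : ∀ w : ℂ, (w = (1 + (s : ℂ)) / conj z ∨ w = (1 - (s : ℂ)) / conj z) →
      conj z * w ^ 2 - 2 * w + z = 0 := by
    rintro w (rfl | rfl) <;>
    · field_simp
      linear_combination hs2C + hmul
  refine ⟨?_, ?_, ?_, ?_, ?_, ?_⟩
  · rw [hfac]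
    have h1 : conj z * (z / (r : ℂ)) ^ 2 - z = 0 := by
      field_simp
      linear_combination z * hmul
    rw [h1, zero_mul]
  · intro v hv hq
    rw [hfac] at hq
    rcases mul_eq_zero.1 hq with hA | hB
    · have hv2 : (v - z / (r : ℂ)) * (v + z / (r : ℂ)) = 0 := by
        field_simp
        linear_combination z * hA - v ^ 2 * hmul
      rcases mul_eq_zero.1 hv2 with h | h
      · exact Or.inl (sub_eq_zero.1 h)
      · exact Or.inr (eq_neg_of_add_eq_zero_left h)
    · exfalso
      have heq : conj z * v ^ 2 + z = 2 * v := by linear_combination hB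
      have habs : ‖conj z * v ^ 2 + z‖ = 2 := by
        rw [heq]; simp [hv]
      have hle : ‖conj z * v ^ 2 + z‖ ≤ 2 * r := by
        calc ‖conj z * v ^ 2 + z‖
            ≤ ‖conj z * v ^ 2‖ + ‖z‖ :=
              norm_add_le _ _
          _ = 2 * r := by simp [map_mul, map_pow, hv, ← hr]; ring
      linarith
  · rw [hfac, h2 _ (Or.inl rfl), mul_zero]
  · rw [hfac, h2 _ (Or.inr rfl), mul_zero]
  · have h1s : (1 : ℂ) + (s : ℂ) = ((1 + s : ℝ) : ℂ) := by push_cast; ring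
    have habs : ‖(1 + (s : ℂ)) / conj z‖ = (1 + s) / r := by
      rw [norm_div, Complex.norm_conj, ← hr, h1s, Complex.norm_real, Real.norm_eq_abs]
      rw [_root_.abs_of_nonneg (by linarith : (0:ℝ) ≤ 1 + s)]
    rw [habs, gt_iff_lt, lt_div_iff₀ hr0]
    nlinarith
  · have h1s : (1 : ℂ) - (s : ℂ) = ((1 - s : ℝ) : ℂ) := by push_cast; ring
    have habs : ‖(1 - (s : ℂ)) / conj z‖ = (1 - s) / r := by
      rw [norm_div, Complex.norm_conj, ← hr, h1s, Complex.norm_real, Real.norm_eq_abs]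
      rw [_root_.abs_of_nonneg (by linarith : (0:ℝ) ≤ 1 - s)]
    rw [habs, div_lt_one hr0]
    nlinarith [hs2, hs0, hr0, sq_nonneg (1 - r - s)]
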